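/- For every real number x > 2, Σ_{m=0}^∞ catalan(m) · x^{−(2m+1)} = (x − √(x²−4))/2. -/

import Mathlib

open Finset

private noncomputable def cbr (m : ℕ) : ℝ := (Nat.centralBinom m : ℝ) / 4 ^ m

private lemma catalan_div_eq (m : ℕ) :
    (catalan m : ℝ) / 4 ^ m = 2 * (cbr m - cbr (m + 1)) := by
  have h1 : ((m : ℝ) + 1) * catalan m = Nat.centralBinom m := by
    exact_mod_cast congrArg (Nat.cast : ℕ → ℝ) (succ_mul_catalan_eq_centralBinom m)
  have h2 : ((m : ℝ) + 1) * Nat.centralBinom (m + 1) = 2 * (2 * m + 1) * Nat.centralBinom m := by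
    exact_mod_cast congrArg (Nat.cast : ℕ → ℝ) (Nat.succ_mul_centralBinom_succ m)
  have hm : (0:ℝ) < (m:ℝ) + 1 := by positivity
  have h4 : (0:ℝ) < 4 ^ m := by positivity
  have h3 : ((m:ℝ)+1) * (4 * (catalan m : ℝ)) =
      ((m:ℝ)+1) * (8 * (Nat.centralBinom m : ℝ) - 2 * (Nat.centralBinom (m+1) : ℝ)) := by
    linear_combination 4 * h1 + 2 * h2
  have h4 : 4 * (catalan m : ℝ) =
      8 * (Nat.centralBinom m : ℝ) - 2 * (Nat.centralBinom (m+1) : ℝ) :=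
    mul_left_cancel₀ (ne_of_gt hm) h3
  unfold cbr
  rw [pow_succ]
  field_simp
  linear_combination h4

private lemma sum_catalan_div_le (n : ℕ) :
    ∑ m ∈ range n, (catalan m : ℝ) / 4 ^ m ≤ 2 := by
  have : ∑ m ∈ range n, (catalan m : ℝ) / 4 ^ m
      = ∑ m ∈ range n, 2 * (cbr m - cbr (m + 1)) := by
    exact Finset.sum_congr rfl fun m _ => catalan_div_eq m
  rw [this, ← Finset.mul_sum, Finset.sum_range_sub' cbr]
  have h0 : cbr 0 = 1 := by simp [cbr, Nat.centralBinom]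
  have hn : 0 ≤ cbr n := by
    unfold cbr; positivity
  nlinarith

/-- For every real `x > 2`, `Σ_{m≥0} catalan(m)·x^{-(2m+1)} = (x - √(x²-4))/2`. -/
theorem catalan_series_eq_sqrt_formula (x : ℝ) (hx : 2 < x) :
    HasSum (fun m : ℕ => (catalan m : ℝ) * x ^ (-(2 * (m : ℤ) + 1)))
      ((x - Real.sqrt (x ^ 2 - 4)) / 2) := by
  have hx0 : (0:ℝ) < x := by linarith
  set t : ℝ := x⁻¹ with ht
  have ht0 : 0 < t := by positivity
  have htx : x * t = 1 := mul_inv_cancel₀ (ne_of_gt hx0)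
  have ht2 : t < 1/2 := by
    rw [ht]
    rw [inv_lt_comm₀ hx0 (by norm_num)]
    linarith
  set f : ℕ → ℝ := fun m => (catalan m : ℝ) * t ^ (2 * m + 1) with hf
  have hfun : (fun m : ℕ => (catalan m : ℝ) * x ^ (-(2 * (m : ℤ) + 1))) = f := by
    funext m
    have hz : x ^ (-(2 * (m : ℤ) + 1)) = (x ^ (2 * m + 1 : ℕ))⁻¹ := by
      rw [← zpow_natCast x (2 * m + 1), ← zpow_neg]
      congr 1
    simp only [hf, hz, ht, inv_pow]
  rw [hfun]
  -- nonnegativity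
  have hf0 : ∀ m, 0 ≤ f m := fun m => by
    simp only [hf]; positivity
  -- partial sum bound
  have hbound : ∀ n, ∑ m ∈ range n, f m ≤ 2 * t := by
    intro n
    have key : ∀ m, f m ≤ t * ((catalan m : ℝ) / 4 ^ m) := by
      intro m
      simp only [hf]
      have h1 : t ^ (2 * m + 1) = t * (t ^ 2) ^ m := by
        rw [← pow_mul]; ring
      rw [h1]
      have h2 : (t ^ 2) ^ m ≤ ((1:ℝ)/4) ^ m := by
        apply pow_le_pow_left₀ (by positivity)
        nlinarith
      have hc : (0:ℝ) ≤ catalan m := Nat.cast_nonneg _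
      calc (catalan m : ℝ) * (t * (t^2)^m) ≤ (catalan m : ℝ) * (t * (1/4)^m) := by
            apply mul_le_mul_of_nonneg_left _ hc
            exact mul_le_mul_of_nonneg_left h2 (le_of_lt ht0)
        _ = t * ((catalan m : ℝ) / 4 ^ m) := by
            rw [div_pow, one_pow]; ring
    calc ∑ m ∈ range n, f m ≤ ∑ m ∈ range n, t * ((catalan m : ℝ) / 4 ^ m) :=
          Finset.sum_le_sum fun m _ => key m
      _ = t * ∑ m ∈ range n, (catalan m : ℝ) / 4 ^ m := by rw [Finset.mul_sum]
      _ ≤ t * 2 := mul_le_mul_of_nonneg_left (sum_catalan_div_le n) (le_of_lt ht0)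
      _ = 2 * t := by ring
  have hsummable : Summable f := summable_of_sum_range_le hf0 hbound
  set S : ℝ := ∑' m, f m with hSdef
  have hS : HasSum f S := hsummable.hasSum
  have hSle : S ≤ 2 * t := Summable.tsum_le_of_sum_range_le hsummable hbound
  -- Cauchy product
  have hnorm : Summable fun m => ‖f m‖ := by
    have : (fun m => ‖f m‖) = f := funext fun m => Real.norm_of_nonneg (hf0 m)
    rw [this]; exact hsummable
  have hcauchy : S * S = ∑' n, ∑ k ∈ range (n + 1), f k * f (n - k) :=
    tsum_mul_tsum_eq_tsum_sum_range_of_summable_norm hnorm hnorm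
  have hinner : ∀ n : ℕ, ∑ k ∈ range (n + 1), f k * f (n - k)
      = (catalan (n + 1) : ℝ) * t ^ (2 * n + 2) := by
    intro n
    have : ∀ k ∈ range (n + 1), f k * f (n - k)
        = ((catalan k : ℝ) * (catalan (n - k) : ℝ)) * t ^ (2 * n + 2) := by
      intro k hk
      rw [Finset.mem_range] at hk
      have hkn : k ≤ n := Nat.lt_succ_iff.mp hk
      simp only [hf]
      have hpow : t ^ (2 * k + 1) * t ^ (2 * (n - k) + 1) = t ^ (2 * n + 2) := by
        rw [← pow_add]
        congr 1
        omega
      calc (catalan k : ℝ) * t ^ (2 * k + 1) * ((catalan (n-k) : ℝ) * t ^ (2 * (n-k) + 1))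
          = ((catalan k : ℝ) * (catalan (n-k) : ℝ)) * (t ^ (2*k+1) * t ^ (2*(n-k)+1)) := by ring
        _ = ((catalan k : ℝ) * (catalan (n-k) : ℝ)) * t ^ (2 * n + 2) := by rw [hpow]
    rw [Finset.sum_congr rfl this, ← Finset.sum_mul]
    congr 1
    rw [catalan_succ]
    push_cast [Finset.sum_range]
    rfl
  -- shifted sum
  have hshift : HasSum (fun n => f (n + 1)) (S - f 0) := by
    have := (hasSum_nat_add_iff' 1).mpr hS
    simpa using this
  have hfshift : ∀ n : ℕ, f (n + 1) = t * ((catalan (n+1) : ℝ) * t ^ (2 * n + 2)) := by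
    intro n
    simp only [hf]
    have h : 2 * (n + 1) + 1 = (2 * n + 2) + 1 := by ring
    rw [h, pow_succ]
    ring
  have hseq : S = t + t * (S * S) := by
    have h1 : HasSum (fun n => (catalan (n+1) : ℝ) * t ^ (2 * n + 2)) ((S - f 0) / t) := by
      have := hshift.div_const t
      have heq : (fun n => (catalan (n+1) : ℝ) * t ^ (2 * n + 2)) = fun i => f (i + 1) / t := by
        funext n
        rw [hfshift n]
        field_simp
      rw [heq]; exact this
    have h2 : ∑' n, ∑ k ∈ range (n + 1), f k * f (n - k) = (S - f 0) / t := by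
      rw [tsum_congr hinner]
      exact h1.tsum_eq
    have hf0v : f 0 = t := by rw [hf]; simp
    rw [hcauchy, h2, hf0v]
    field_simp
    ring
  -- the algebraic value
  set s : ℝ := Real.sqrt (x ^ 2 - 4) with hs
  have hs2 : s ^ 2 = x ^ 2 - 4 := Real.sq_sqrt (by nlinarith)
  have hs0 : 0 < s := Real.sqrt_pos.mpr (by nlinarith)
  set y : ℝ := (x - s) / 2 with hy
  have hyx : x * y = 1 + y ^ 2 := by
    rw [hy]; nlinarith [hs2]
  have hyeq : y = t + t * (y * y) := by
    have : x * (t + t * (y * y)) = x * y := by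
      have : x * (t + t * (y*y)) = (x*t) * (1 + y^2) := by ring
      rw [this, htx, one_mul, hyx]
    exact (mul_left_cancel₀ (ne_of_gt hx0) this.symm)
  -- S = y
  have hkey : (S - y) * (1 - t * (S + y)) = 0 := by
    nlinarith [hseq, hyeq]
  have hylt : y < x / 2 := by
    rw [hy]; linarith
  have hty : t * y < 1 / 2 := by
    calc t * y < t * (x / 2) := by
          apply mul_lt_mul_of_pos_left hylt ht0
      _ = (x * t) / 2 := by ring
      _ = 1 / 2 := by rw [htx]
  have htS : t * S < 1 / 2 := by
    calc t * S ≤ t * (2 * t) := mul_le_mul_of_nonneg_left hSle (le_of_lt ht0)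
      _ = 2 * t ^ 2 := by ring
      _ < 1 / 2 := by nlinarith
  have hne : 1 - t * (S + y) ≠ 0 := by
    have : t * (S + y) < 1 := by nlinarith
    linarith
  have hSy : S = y := by
    rcases mul_eq_zero.mp hkey with h | h
    · linarith
    · exact absurd h hne
  rwa [hSy] at hS
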